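/- Let N ≥ 1, let ν > 0, let x lie in the interior of C_N^B, and let φ : [0,∞) → ℝ^N be a continuously differentiable function taking values in the interior of C_N^B with φ(0) = x that solves the ODE of type B_N with parameter ν. Then for all t ≥ 0, ‖φ(t)‖² = 2N(N + ν − 1)·t + ‖x‖², where ‖·‖ is the Euclidean norm on ℝ^N. -/

import Mathlib

open scoped BigOperators

noncomputable section

/-- The interior of the closed Weyl chamber of type B. -/
def interiorB {N : ℕ} (x : Fin N → ℝ) : Prop := StrictAnti x ∧ ∀ i, 0 < x i

/-- `φ` solves the ODE of type `B_N` with parameter `ν` on `[0,∞)`. -/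
def solvesB {N : ℕ} (ν : ℝ) (φ : ℝ → Fin N → ℝ) : Prop :=
  ∀ t ∈ Set.Ici (0:ℝ), ∀ i : Fin N,
    HasDerivWithinAt (fun s => φ s i)
      ((∑ j ∈ Finset.univ.erase i,
          (1 / (φ t i - φ t j) + 1 / (φ t i + φ t j))) + ν / φ t i)
      (Set.Ici 0) t

lemma sumB (N : ℕ) (hN : 1 ≤ N) (ν : ℝ) (x : Fin N → ℝ)
    (hxa : StrictAnti x) (hxp : ∀ i, 0 < x i) :
    ∑ i : Fin N, 2 * x i *
        ((∑ j ∈ Finset.univ.erase i, (1 / (x i - x j) + 1 / (x i + x j))) + ν / x i)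
      = 2 * N * (N + ν - 1) := by
  have hne : ∀ i j : Fin N, i ≠ j → x i ≠ x j := fun i j h => hxa.injective.ne h
  have hpos : ∀ i j : Fin N, (0:ℝ) < x i + x j := fun i j => add_pos (hxp i) (hxp j)
  set G : Fin N → Fin N → ℝ := fun i j => x i * (1 / (x i - x j) + 1 / (x i + x j)) with hG
  have h1 : ∀ i : Fin N,
      2 * x i * ((∑ j ∈ Finset.univ.erase i, (1 / (x i - x j) + 1 / (x i + x j))) + ν / x i)
        = 2 * ((∑ j ∈ Finset.univ.erase i, G i j) + ν) := by
    intro i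
    have hx0 : x i ≠ 0 := (hxp i).ne'
    rw [mul_add, mul_add]
    congr 1
    · rw [Finset.mul_sum, Finset.mul_sum]
      exact Finset.sum_congr rfl (fun j _ => by rw [hG]; ring)
    · field_simp
  set S : ℝ := ∑ i : Fin N, ∑ j ∈ Finset.univ.erase i, G i j with hS
  have hswap : S = ∑ i : Fin N, ∑ j ∈ Finset.univ.erase i, G j i := by
    rw [hS]
    have e : ∀ (H : Fin N → Fin N → ℝ), (∑ i : Fin N, ∑ j ∈ Finset.univ.erase i, H i j)
        = ∑ i : Fin N, ∑ j : Fin N, if j ≠ i then H i j else 0 := by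
      intro H
      refine Finset.sum_congr rfl (fun i _ => ?_)
      rw [← Finset.sum_filter]
      congr 1
      ext j
      simp [Finset.mem_erase]
    rw [e, e]
    rw [Finset.sum_comm]
    refine Finset.sum_congr rfl (fun i _ => Finset.sum_congr rfl (fun j _ => ?_))
    simp [ne_comm]
  have hpair : S + S = ∑ i : Fin N, ∑ j ∈ Finset.univ.erase i, (2:ℝ) := by
    nth_rewrite 2 [hswap]
    rw [hS, ← Finset.sum_add_distrib]
    refine Finset.sum_congr rfl (fun i _ => ?_)
    rw [← Finset.sum_add_distrib]
    refine Finset.sum_congr rfl (fun j hj => ?_)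
    have hij : j ≠ i := (Finset.mem_erase.1 hj).1
    have h1 : x i - x j ≠ 0 := sub_ne_zero.2 (hne i j hij.symm)
    have h2 : x j - x i ≠ 0 := sub_ne_zero.2 (hne j i hij)
    have h3 : x i + x j ≠ 0 := (hpos i j).ne'
    have h4 : x j + x i ≠ 0 := (hpos j i).ne'
    rw [hG]
    field_simp
    ring
  have hcard : ∀ i : Fin N, (Finset.univ.erase i).card = N - 1 := by
    intro i
    rw [Finset.card_erase_of_mem (Finset.mem_univ i), Finset.card_univ, Fintype.card_fin]
  have hSval : S = N * (N - 1) := by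
    have : S + S = N * ((N - 1) * 2) := by
      rw [hpair]
      simp only [Finset.sum_const, hcard, nsmul_eq_mul, Finset.card_univ, Fintype.card_fin]
      rw [Nat.cast_sub hN]
      push_cast
      ring
    linarith
  calc ∑ i : Fin N, 2 * x i *
        ((∑ j ∈ Finset.univ.erase i, (1 / (x i - x j) + 1 / (x i + x j))) + ν / x i)
      = ∑ i : Fin N, 2 * ((∑ j ∈ Finset.univ.erase i, G i j) + ν) :=
        Finset.sum_congr rfl (fun i _ => h1 i)
    _ = 2 * (S + N * ν) := by
        rw [hS]
        rw [← Finset.mul_sum, Finset.sum_add_distrib]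
        simp [Finset.sum_const, Finset.card_univ, mul_add]
    _ = 2 * N * (N + ν - 1) := by rw [hSval]; ring

/-- Growth of the Euclidean norm along solutions of the ODE of type `B_N`:
`‖φ(t)‖² = 2N(N + ν - 1)t + ‖x‖²`. -/
theorem statement10 (N : ℕ) (hN : 1 ≤ N) (ν : ℝ) (hν : 0 < ν)
    (x : Fin N → ℝ) (hx : interiorB x)
    (φ : ℝ → Fin N → ℝ) (hφ0 : φ 0 = x)
    (hint : ∀ t ∈ Set.Ici (0:ℝ), interiorB (φ t))
    (hode : solvesB ν φ) :
    ∀ t ∈ Set.Ici (0:ℝ),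
      ‖(WithLp.equiv 2 (Fin N → ℝ)).symm (φ t)‖^2
        = 2 * N * (N + ν - 1) * t + ‖(WithLp.equiv 2 (Fin N → ℝ)).symm x‖^2 := by
  set c : ℝ := 2 * N * (N + ν - 1) with hc
  have hnorm : ∀ y : Fin N → ℝ,
      ‖(WithLp.equiv 2 (Fin N → ℝ)).symm y‖^2 = ∑ i, y i ^ 2 := by
    intro y
    rw [EuclideanSpace.norm_eq, Real.sq_sqrt (by positivity)]
    simp [Real.norm_eq_abs, sq_abs]
  have hf : ∀ t ∈ Set.Ici (0:ℝ),
      HasDerivWithinAt (fun s => ∑ i, φ s i ^ 2) c (Set.Ici 0) t := by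
    intro t ht
    have h := HasDerivWithinAt.fun_sum (fun i (_ : i ∈ Finset.univ) => (hode t ht i).pow 2)
    have heq : (∑ i : Fin N, (2:ℕ) * φ t i ^ (2-1) *
        ((∑ j ∈ Finset.univ.erase i,
          (1 / (φ t i - φ t j) + 1 / (φ t i + φ t j))) + ν / φ t i)) = c := by
      rw [hc, ← sumB N hN ν (φ t) (hint t ht).1 (hint t ht).2]
      exact Finset.sum_congr rfl (fun i _ => by norm_num)
    rw [heq] at h
    exact h
  intro t ht
  have key := eq_of_has_deriv_right_eq (a := 0) (b := t)
    (f := fun s => ∑ i, φ s i ^ 2) (g := fun s => c * s + ∑ i, x i ^ 2)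
    (f' := fun _ => c)
    (fun y hy => (hf y hy.1).mono (Set.Ici_subset_Ici.2 hy.1))
    (fun y hy => by
      have : HasDerivAt (fun s : ℝ => c * s + ∑ i, x i ^ 2) (c * 1) y :=
        ((hasDerivAt_id y).const_mul c).add_const _
      simpa using this.hasDerivWithinAt)
    (fun y hy => ((hf y hy.1).continuousWithinAt).mono (fun z hz => hz.1))
    (by fun_prop)
    (by simp [hφ0])
  have h2 : (∑ i, φ t i ^ 2) = c * t + ∑ i, x i ^ 2 := key t ⟨ht, le_refl t⟩
  rw [hnorm, hnorm]
  simpa using h2
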